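/- Let 𝒳 ⊆ ℝ^d, let MaxAff(x) = max_{i∈[N]}(a_iᵀx + b_i) be a max-affine function with N ≥ n components, and let Δ > 0. For x ∈ ℝ^d admitting a unique index j(x) ∈ [N] with a_{j(x)}ᵀx + b_{j(x)} ≥ a_jᵀx + b_j + Δ for all j ≠ j(x), let F(x) = V_{j(x)}, where V_1,…,V_N ∈ ℝ^{d_V} are given vectors. Then for every ε > 0 there exist a sum-of-linear-transformations layer Linear : ℝ^{d×n} → ℝ^{(d+N)×N} and matrices W_K, W_Q, W_V, W_O (of suitable dimensions) such that for every X = [X_1,…,X_n] ∈ ℝ^{d×n} whose columns all lie in 𝒳 and all satisfy the Δ-margin condition above, ‖W_V·Linear(X) · Softmax((W_K·Linear(X))ᵀ · W_Q·Linear(X)) · W_O − [F(X_1), F(X_2), …, F(X_n)]‖_∞ ≤ ε. -/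

import Mathlib

open Matrix

/-- Column-wise softmax of a real matrix. -/
noncomputable def softmax {a b : ℕ} (M : Matrix (Fin a) (Fin b) ℝ) :
    Matrix (Fin a) (Fin b) ℝ :=
  Matrix.of fun i j => Real.exp (M i j) / ∑ k, Real.exp (M k j)

namespace AttnAux

variable {d n N dV : ℕ}

def Pm (d N : ℕ) : Matrix (Fin (d + N)) (Fin d) ℝ :=
  Matrix.of fun i j => Fin.addCases (fun i' => if i' = j then (1:ℝ) else 0) (fun _ => 0) i

def Qm (n N : ℕ) (hNn : n ≤ N) : Matrix (Fin n) (Fin N) ℝ :=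
  Matrix.of fun i j => if Fin.castLE hNn i = j then (1:ℝ) else 0

def Rm (d N : ℕ) : Matrix (Fin (d + N)) (Fin N) ℝ :=
  Matrix.of fun i j => Fin.addCases (fun _ => (0:ℝ)) (fun i' => if i' = j then 1 else 0) i

def Km (a : Fin N → Fin d → ℝ) (b : Fin N → ℝ) : Matrix (Fin (d + 1)) (Fin (d + N)) ℝ :=
  Matrix.of fun i k =>
    Fin.addCases (fun _ => (0:ℝ)) (fun k' => Fin.lastCases (b k') (fun i' => a k' i') i) k

def Qw (β : ℝ) (d N : ℕ) : Matrix (Fin (d + 1)) (Fin (d + N)) ℝ :=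
  Matrix.of fun i k =>
    β * Fin.addCases (fun k' => Fin.lastCases 0 (fun i' => if k' = i' then (1:ℝ) else 0) i)
      (fun _ => Fin.lastCases 1 (fun _ => (0:ℝ)) i) k

def Vm (V : Fin N → Fin dV → ℝ) : Matrix (Fin dV) (Fin (d + N)) ℝ :=
  Matrix.of fun r k => Fin.addCases (fun _ => (0:ℝ)) (fun k' => V k' r) k

def Om (n N : ℕ) (hNn : n ≤ N) : Matrix (Fin N) (Fin n) ℝ :=
  Matrix.of fun k c => if k = Fin.castLE hNn c then (1:ℝ) else 0

variable (hNn : n ≤ N) (Xm : Matrix (Fin d) (Fin n) ℝ)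

lemma L_bot (k' j : Fin N) :
    (Pm d N * Xm * Qm n N hNn + Rm d N) (Fin.natAdd d k') j = if k' = j then 1 else 0 := by
  simp [Pm, Qm, Rm, Matrix.add_apply, Matrix.mul_apply]

lemma L_top (k' : Fin d) (c : Fin n) :
    (Pm d N * Xm * Qm n N hNn + Rm d N) (Fin.castAdd N k') (Fin.castLE hNn c) = Xm k' c := by
  simp [Pm, Qm, Rm, Matrix.add_apply, Matrix.mul_apply, Fin.castLE_inj]

lemma KL (a : Fin N → Fin d → ℝ) (b : Fin N → ℝ) (i : Fin (d+1)) (j : Fin N) :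
    (Km a b * (Pm d N * Xm * Qm n N hNn + Rm d N)) i j
      = Fin.lastCases (b j) (fun i' => a j i') i := by
  rw [Matrix.mul_apply, Fin.sum_univ_add]
  simp [Km, L_bot hNn Xm]

lemma QL (β : ℝ) (i : Fin (d+1)) (c : Fin n) :
    (Qw β d N * (Pm d N * Xm * Qm n N hNn + Rm d N)) i (Fin.castLE hNn c)
      = Fin.lastCases β (fun i' => β * Xm i' c) i := by
  rw [Matrix.mul_apply, Fin.sum_univ_add]
  have h1 : ∀ k' : Fin d,
      (Pm d N * Xm * Qm n N hNn + Rm d N) (Fin.castAdd N k') (Fin.castLE hNn c) = Xm k' c :=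
    fun k' => L_top hNn Xm k' c
  have h2 : ∀ k' : Fin N,
      (Pm d N * Xm * Qm n N hNn + Rm d N) (Fin.natAdd d k') (Fin.castLE hNn c)
        = if k' = Fin.castLE hNn c then 1 else 0 :=
    fun k' => L_bot hNn Xm k' _
  simp only [Qw, Matrix.of_apply, Fin.addCases_left, Fin.addCases_right, h1, h2]
  induction i using Fin.lastCases with
  | last => simp [mul_comm]
  | cast i' => simp [mul_comm]

lemma VL (V : Fin N → Fin dV → ℝ) (r : Fin dV) (j : Fin N) :
    (Vm (d := d) V * (Pm d N * Xm * Qm n N hNn + Rm d N)) r j = V j r := by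
  rw [Matrix.mul_apply, Fin.sum_univ_add]
  simp [Vm, L_bot hNn Xm]

lemma score (β : ℝ) (a : Fin N → Fin d → ℝ) (b : Fin N → ℝ) (j : Fin N) (c : Fin n) :
    ((Km a b * (Pm d N * Xm * Qm n N hNn + Rm d N))ᵀ
        * (Qw β d N * (Pm d N * Xm * Qm n N hNn + Rm d N))) j (Fin.castLE hNn c)
      = β * ((∑ t, a j t * Xm t c) + b j) := by
  rw [Matrix.mul_apply]
  simp only [Matrix.transpose_apply, KL hNn Xm a b, QL hNn Xm β]
  rw [Fin.sum_univ_castSucc]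
  simp [mul_add, Finset.mul_sum, mul_comm, mul_left_comm]

lemma SO (M : Matrix (Fin N) (Fin N) ℝ) (j : Fin N) (c : Fin n) :
    (softmax M * Om n N hNn) j c = softmax M j (Fin.castLE hNn c) := by
  simp [Om, Matrix.mul_apply]

end AttnAux

open AttnAux in
/-- **Attention reassigns values to the cells of a max-affine partition.**
Given a max-affine function with `N ≥ n` components on `𝒳 ⊆ ℝ^d`, a margin `Δ > 0`,
and values `V_1, …, V_N ∈ ℝ^{d_V}` (so that `F(x) = V_{j(x)}`, where `j(x)` is the
index of the dominating affine component), for every `ε > 0` there are a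
sum-of-linear-transformations layer `Linear : ℝ^{d×n} → ℝ^{(d+N)×N}`
(given by `Z ↦ ∑ i, P i * Z * Q i + Rb`) and matrices `W_K, W_Q, W_V, W_O`
of suitable dimensions such that for every input `X ∈ ℝ^{d×n}` whose columns lie in
`𝒳` and each admit a (unique) index `jx c` whose affine component exceeds all others
by at least `Δ`, the attention output
`W_V·Linear(X) · Softmax((W_K·Linear(X))ᵀ·(W_Q·Linear(X))) · W_O`
is entrywise within `ε` of `[F(X_1), …, F(X_n)]`. -/
theorem attention_reassigns_values_maxaffine
    (d n N dV : ℕ) (hd : 0 < d) (hn : 0 < n) (hNn : n ≤ N)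
    (X : Set (Fin d → ℝ))
    (a : Fin N → Fin d → ℝ) (b : Fin N → ℝ)
    (V : Fin N → Fin dV → ℝ)
    (Δ : ℝ) (hΔ : 0 < Δ) (ε : ℝ) (hε : 0 < ε) :
    ∃ (H : ℕ) (P : Fin H → Matrix (Fin (d + N)) (Fin d) ℝ)
      (Q : Fin H → Matrix (Fin n) (Fin N) ℝ)
      (Rb : Matrix (Fin (d + N)) (Fin N) ℝ)
      (dA : ℕ) (WK WQ : Matrix (Fin dA) (Fin (d + N)) ℝ)
      (WV : Matrix (Fin dV) (Fin (d + N)) ℝ)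
      (WO : Matrix (Fin N) (Fin n) ℝ),
      ∀ (Xm : Matrix (Fin d) (Fin n) ℝ) (jx : Fin n → Fin N),
        (∀ c : Fin n, (fun r => Xm r c) ∈ X) →
        (∀ c : Fin n, ∀ j : Fin N, j ≠ jx c →
          (∑ t, a (jx c) t * Xm t c) + b (jx c) ≥ ((∑ t, a j t * Xm t c) + b j) + Δ) →
        ∀ (r : Fin dV) (c : Fin n),
          |(WV * (∑ i, P i * Xm * Q i + Rb) *
              softmax ((WK * (∑ i, P i * Xm * Q i + Rb))ᵀ *
                (WQ * (∑ i, P i * Xm * Q i + Rb))) * WO) r c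
            - V (jx c) r| ≤ ε := by
  have hN : 0 < N := lt_of_lt_of_le hn hNn
  set C : ℝ := (∑ j, ∑ r, |V j r|) + 1 with hCdef
  have hC1 : 1 ≤ C := by
    have : (0:ℝ) ≤ ∑ j, ∑ r, |V j r| :=
      Finset.sum_nonneg fun j _ => Finset.sum_nonneg fun r _ => abs_nonneg _
    simp only [hCdef]; linarith
  have hCpos : (0:ℝ) < C := lt_of_lt_of_le one_pos hC1
  have hVle : ∀ j r, |V j r| ≤ C - 1 := by
    intro j r
    have h1 : |V j r| ≤ ∑ r', |V j r'| :=
      Finset.single_le_sum (f := fun r' => |V j r'|) (fun r' _ => abs_nonneg _)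
        (Finset.mem_univ r)
    have h2 : (∑ r', |V j r'|) ≤ ∑ j', ∑ r', |V j' r'| :=
      Finset.single_le_sum (f := fun j' => ∑ r', |V j' r'|)
        (fun j' _ => Finset.sum_nonneg fun r' _ => abs_nonneg _) (Finset.mem_univ j)
    simp only [hCdef]; linarith
  have h2CN : (0:ℝ) < 2 * C * N := by positivity
  set δ : ℝ := min (ε / (2 * C * N)) 1 with hδdef
  have hδpos : 0 < δ := lt_min (by positivity) one_pos
  have hδ1 : δ ≤ 1 := min_le_right _ _
  have hδε : δ ≤ ε / (2 * C * N) := min_le_left _ _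
  set β : ℝ := -Real.log δ / Δ with hβdef
  have hβ0 : 0 ≤ β := by
    have : Real.log δ ≤ 0 := Real.log_nonpos hδpos.le hδ1
    have : 0 ≤ -Real.log δ := by linarith
    positivity
  have hexp : Real.exp (-(β * Δ)) = δ := by
    have hβΔ : β * Δ = -Real.log δ := by
      rw [hβdef]; exact div_mul_cancel₀ _ hΔ.ne'
    rw [hβΔ, neg_neg, Real.exp_log hδpos]
  refine ⟨1, fun _ => Pm d N, fun _ => Qm n N hNn, Rm d N, d + 1, Km a b, Qw β d N,
    Vm (d := d) V, Om n N hNn, ?_⟩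
  intro Xm jx hX hmargin r c
  have hsum : (∑ i : Fin 1, Pm d N * Xm * Qm n N hNn) = Pm d N * Xm * Qm n N hNn := by
    simp
  rw [hsum]
  set L := Pm d N * Xm * Qm n N hNn + Rm d N with hLdef
  set s : Fin N → ℝ := fun j => (∑ t, a j t * Xm t c) + b j with hsdef
  set Sc := (Km a b * L)ᵀ * (Qw β d N * L) with hScdef
  set w : Fin N → ℝ := fun j => softmax Sc j (Fin.castLE hNn c) with hwdef
  have hw : ∀ j, w j = Real.exp (β * s j) / ∑ k, Real.exp (β * s k) := by
    intro j
    simp only [hwdef, hsdef, softmax, Matrix.of_apply, hScdef, hLdef,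
      score hNn Xm β a b]
  have hDpos : 0 < ∑ k, Real.exp (β * s k) :=
    Finset.sum_pos (fun k _ => Real.exp_pos _) ⟨jx c, Finset.mem_univ _⟩
  have hwsum : (∑ j, w j) = 1 := by
    rw [Finset.sum_congr rfl (fun j _ => hw j), ← Finset.sum_div,
      div_self hDpos.ne']
  have hwnn : ∀ j, 0 ≤ w j := by
    intro j; rw [hw]
    exact div_nonneg (Real.exp_pos _).le hDpos.le
  have hwle : ∀ j, j ≠ jx c → w j ≤ δ := by
    intro j hj
    have hmono : Real.exp (β * s (jx c)) ≤ ∑ k, Real.exp (β * s k) :=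
      Finset.single_le_sum (f := fun k => Real.exp (β * s k))
        (fun k _ => (Real.exp_pos _).le) (Finset.mem_univ _)
    have h1 : w j ≤ Real.exp (β * s j) / Real.exp (β * s (jx c)) := by
      rw [hw]
      gcongr
    have hm := hmargin c j hj
    have h2 : β * s j - β * s (jx c) ≤ -(β * Δ) := by
      have hs : s j - s (jx c) ≤ -Δ := by simp only [hsdef]; linarith
      have hmul : β * (s j - s (jx c)) ≤ β * (-Δ) :=
        mul_le_mul_of_nonneg_left hs hβ0
      have he1 : β * s j - β * s (jx c) = β * (s j - s (jx c)) := by ring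
      have he2 : -(β * Δ) = β * (-Δ) := by ring
      rw [he1, he2]; exact hmul
    calc w j ≤ Real.exp (β * s j) / Real.exp (β * s (jx c)) := h1
      _ = Real.exp (β * s j - β * s (jx c)) := (Real.exp_sub _ _).symm
      _ ≤ Real.exp (-(β * Δ)) := Real.exp_le_exp.mpr h2
      _ = δ := hexp
  have hout : (Vm (d := d) V * L * softmax Sc * Om n N hNn) r c = ∑ j, V j r * w j := by
    rw [Matrix.mul_apply]
    have : ∀ k : Fin N, (Vm (d := d) V * L * softmax Sc) r k * Om n N hNn k c
        = if k = Fin.castLE hNn c then (Vm (d := d) V * L * softmax Sc) r k else 0 := by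
      intro k; simp [Om]
    simp only [this, Finset.sum_ite_eq', Finset.mem_univ, if_true]
    rw [Matrix.mul_apply]
    congr 1
    ext j
    rw [VL hNn Xm V]
  rw [hout]
  have htwoC : (0:ℝ) ≤ 2 * (C - 1) := by linarith
  have key : (∑ j, V j r * w j) - V (jx c) r = ∑ j, (V j r - V (jx c) r) * w j := by
    have e1 : ∑ j, (V j r - V (jx c) r) * w j
        = (∑ j, V j r * w j) - ∑ j, V (jx c) r * w j := by
      rw [← Finset.sum_sub_distrib]
      exact Finset.sum_congr rfl fun j _ => by ring
    have e2 : (∑ j, V (jx c) r * w j) = V (jx c) r := by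
      rw [← Finset.mul_sum, hwsum, mul_one]
    rw [e1, e2]
  have hterm : ∀ j ∈ Finset.univ,
      |(V j r - V (jx c) r) * w j| ≤ if j = jx c then 0 else 2 * (C - 1) * δ := by
    intro j _
    by_cases hj : j = jx c
    · subst hj; simp
    · rw [if_neg hj, abs_mul, abs_of_nonneg (hwnn j)]
      have hb1 : |V j r - V (jx c) r| ≤ 2 * (C - 1) := by
        have := abs_sub (V j r) (V (jx c) r)
        have h1 := hVle j r
        have h2 := hVle (jx c) r
        calc |V j r - V (jx c) r| ≤ |V j r| + |V (jx c) r| := abs_sub _ _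
          _ ≤ 2 * (C - 1) := by linarith
      exact mul_le_mul hb1 (hwle j hj) (hwnn j) htwoC
  have hδ' : δ * (2 * C * ↑N) ≤ ε := by
    rw [← le_div_iff₀ h2CN]; exact hδε
  calc |(∑ j, V j r * w j) - V (jx c) r|
      = |∑ j, (V j r - V (jx c) r) * w j| := by rw [key]
    _ ≤ ∑ j, |(V j r - V (jx c) r) * w j| := Finset.abs_sum_le_sum_abs _ _
    _ ≤ ∑ j, (if j = jx c then 0 else 2 * (C - 1) * δ) := Finset.sum_le_sum hterm
    _ ≤ ∑ _j : Fin N, 2 * (C - 1) * δ := by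
        refine Finset.sum_le_sum fun j _ => ?_
        split
        · exact mul_nonneg htwoC hδpos.le
        · exact le_rfl
    _ = ↑N * (2 * (C - 1) * δ) := by
        rw [Finset.sum_const, Finset.card_univ, Fintype.card_fin, nsmul_eq_mul]
    _ ≤ δ * (2 * C * ↑N) := by
        have hNnn : (0:ℝ) ≤ (N:ℝ) := Nat.cast_nonneg N
        have hr : δ * (2 * C * ↑N) - ↑N * (2 * (C - 1) * δ) = 2 * ↑N * δ := by ring
        have h0 : (0:ℝ) ≤ 2 * ↑N * δ := by positivity
        linarith
    _ ≤ ε := hδ'
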